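/- Define c : ℕ → ℝ by c 1 = √2 and c (n+1) = √(2 + c n) (real square roots). Then the sequence of partial products P n = ∏_{k=1}^{n} (c k / 2) converges, and its limit equals 2/π. -/

import Mathlib

open Filter Real Finset

lemma viete_aux_prod (n : ℕ) :
    (∏ k ∈ Finset.Icc 1 n, Real.cos (π / 2 ^ (k + 1))) * (2 ^ n * Real.sin (π / 2 ^ (n + 1)))
      = 1 := by
  induction n with
  | zero => simp
  | succ n ih =>
    rw [Finset.prod_Icc_succ_top (by omega)]
    have key : Real.sin (π / 2 ^ (n + 1)) =
        2 * Real.sin (π / 2 ^ (n + 2)) * Real.cos (π / 2 ^ (n + 2)) := by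
      rw [← Real.sin_two_mul]
      congr 1
      rw [pow_succ]
      ring
    rw [key] at ih
    calc (∏ k ∈ Finset.Icc 1 n, Real.cos (π / 2 ^ (k + 1))) * Real.cos (π / 2 ^ (n + 1 + 1)) *
          (2 ^ (n + 1) * Real.sin (π / 2 ^ (n + 1 + 1)))
        = (∏ k ∈ Finset.Icc 1 n, Real.cos (π / 2 ^ (k + 1))) *
          (2 ^ n * (2 * Real.sin (π / 2 ^ (n + 2)) * Real.cos (π / 2 ^ (n + 2)))) := by
          ring
      _ = 1 := ih

lemma viete_sin_pos (n : ℕ) : 0 < Real.sin (π / 2 ^ (n + 1)) := by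
  apply Real.sin_pos_of_pos_of_lt_pi
  · positivity
  · exact div_lt_self Real.pi_pos (one_lt_pow₀ one_lt_two n.succ_ne_zero)

/-- Viète (1593): with `c 1 = √2` and `c (n+1) = √(2 + c n)`, the partial
products `∏_{k=1}^n (c k / 2)` converge to `2/π`. -/
theorem viete_product (c : ℕ → ℝ) (hc1 : c 1 = Real.sqrt 2)
    (hc : ∀ n, 1 ≤ n → c (n + 1) = Real.sqrt (2 + c n)) :
    Tendsto (fun n => ∏ k ∈ Finset.Icc 1 n, (c k / 2)) atTop (nhds (2 / Real.pi)) := by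
  have hcs : ∀ n, 1 ≤ n → c n = Real.sqrtTwoAddSeries 0 n := by
    intro n hn
    induction n with
    | zero => omega
    | succ n ih =>
      rcases Nat.eq_or_lt_of_le hn with h | h
      · obtain rfl : n = 0 := by omega
        simpa using hc1
      · have hn1 : 1 ≤ n := by omega
        rw [hc n hn1, ih hn1, Real.sqrtTwoAddSeries]
  have hcos : ∀ n, 1 ≤ n → c n / 2 = Real.cos (π / 2 ^ (n + 1)) := by
    intro n hn
    rw [Real.cos_pi_over_two_pow, hcs n hn]
  have hprod : ∀ n, (∏ k ∈ Finset.Icc 1 n, (c k / 2)) =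
      (2 ^ n * Real.sin (π / 2 ^ (n + 1)))⁻¹ := by
    intro n
    have h1 : (∏ k ∈ Finset.Icc 1 n, (c k / 2)) =
        ∏ k ∈ Finset.Icc 1 n, Real.cos (π / 2 ^ (k + 1)) := by
      apply Finset.prod_congr rfl
      intro k hk
      exact hcos k (Finset.mem_Icc.mp hk).1
    rw [h1]
    exact eq_inv_of_mul_eq_one_left (viete_aux_prod n)
  simp only [hprod]
  have hlim : Tendsto (fun n : ℕ => 2 ^ n * Real.sin (π / 2 ^ (n + 1))) atTop
      (nhds (π / 2)) := by
    have hslope : Tendsto (fun x : ℝ => Real.sin x / x) (nhdsWithin 0 {(0:ℝ)}ᶜ)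
        (nhds 1) := by
      have := (Real.hasDerivAt_sin 0)
      rw [hasDerivAt_iff_tendsto_slope] at this
      simp only [Real.cos_zero] at this
      convert this using 2 with x
      simp [slope_def_field, div_eq_div_iff]
    have ht0 : Tendsto (fun n : ℕ => π / 2 ^ (n + 1)) atTop (nhdsWithin 0 {(0:ℝ)}ᶜ) := by
      apply tendsto_nhdsWithin_of_tendsto_nhds_of_eventually_within
      · have : Tendsto (fun n : ℕ => (2:ℝ) ^ (n + 1)) atTop atTop :=
          (tendsto_pow_atTop_atTop_of_one_lt one_lt_two).comp (tendsto_add_atTop_nat 1)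
        simpa [div_eq_mul_inv] using this.inv_tendsto_atTop.const_mul π
      · filter_upwards with n
        have : (0:ℝ) < π / 2 ^ (n + 1) := by positivity
        simp [this.ne']
    have hcomp : Tendsto (fun n : ℕ => Real.sin (π / 2 ^ (n + 1)) / (π / 2 ^ (n + 1)))
        atTop (nhds 1) := hslope.comp ht0
    have := hcomp.const_mul (π / 2)
    rw [mul_one] at this
    convert this using 2 with n
    have h2 : (0:ℝ) < (2:ℝ) ^ (n + 1) := by positivity
    field_simp
    ring
  have hπ2 : (π / 2) ≠ 0 := by positivity
  have := hlim.inv₀ hπ2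
  rw [show (π / 2)⁻¹ = 2 / π by field_simp] at this
  exact this
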